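/- Every finite tree of pathwidth at most 1 is a caterpillar, i.e., has path eccentricity at most 1. -/

import Mathlib

/-- A path decomposition of `G`: a finite sequence of bags covering all vertices and all
edges, in which the set of bags containing any fixed vertex is an interval of indices. -/
def IsPathDecomp {V : Type*} (G : SimpleGraph V) {r : ℕ} (X : Fin r → Set V) : Prop :=
  (∀ v, ∃ i, v ∈ X i) ∧
  (∀ ⦃u v⦄, G.Adj u v → ∃ i, u ∈ X i ∧ v ∈ X i) ∧
  (∀ v (i j k : Fin r), i ≤ j → j ≤ k → v ∈ X i → v ∈ X k → v ∈ X j)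

/-- The pathwidth of `G`: the minimum over all path decompositions of the maximum bag size
minus one. -/
noncomputable def pathwidth {V : Type*} (G : SimpleGraph V) : ℕ :=
  sInf {w | ∃ (r : ℕ) (X : Fin r → Set V), IsPathDecomp G X ∧ ∀ i, (X i).ncard ≤ w + 1}

/-- The path eccentricity of a graph `T`: the minimum, over all paths `B` of `T`, of the
maximum distance from a vertex of `T` to `B`. -/
noncomputable def pathEcc {V : Type*} (T : SimpleGraph V) : ℕ :=
  sInf {k | ∃ (u v : V) (w : T.Walk u v), w.IsPath ∧ ∀ x : V, ∃ y ∈ w.support, T.dist x y ≤ k}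

section helpers
variable {V : Type*} {G : SimpleGraph V}

lemma my_getVert_mem_support {u v : V} (p : G.Walk u v) (i : ℕ) : p.getVert i ∈ p.support := by
  induction p generalizing i with
  | nil => simp [SimpleGraph.Walk.getVert]
  | cons h q ih =>
    cases i with
    | zero => simp
    | succ n =>
      simp only [SimpleGraph.Walk.getVert_cons_succ, SimpleGraph.Walk.support_cons,
        List.mem_cons]
      right; exact ih n

lemma my_path_getVert_ne {u v : V} {p : G.Walk u v} (hp : p.IsPath) {i j : ℕ}
    (hij : i < j) (hj : j ≤ p.length) : p.getVert i ≠ p.getVert j := by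
  induction p generalizing i j with
  | nil => simp at hj; omega
  | cons h q ih =>
    rw [SimpleGraph.Walk.cons_isPath_iff] at hp
    cases j with
    | zero => omega
    | succ m =>
      cases i with
      | zero =>
        simp only [SimpleGraph.Walk.getVert_zero, SimpleGraph.Walk.getVert_cons_succ]
        intro he
        exact hp.2 (he ▸ my_getVert_mem_support q m)
      | succ n =>
        simp only [SimpleGraph.Walk.getVert_cons_succ]
        exact ih hp.1 (by omega) (by simpa [SimpleGraph.Walk.length_cons] using hj)

lemma my_dist_getVert_le (hc : G.Connected) {x y : V} (p : G.Walk x y) (i : ℕ) :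
    G.dist x (p.getVert i) ≤ i := by
  induction p generalizing i with
  | nil => simp [SimpleGraph.Walk.getVert, SimpleGraph.dist_self]
  | cons h q ih =>
    cases i with
    | zero => simp
    | succ n =>
      simp only [SimpleGraph.Walk.getVert_cons_succ]
      calc G.dist _ (q.getVert n) ≤ G.dist _ _ + G.dist _ (q.getVert n) := hc.dist_triangle
        _ ≤ 1 + n := by
            gcongr
            · exact (SimpleGraph.dist_le (SimpleGraph.Walk.cons h SimpleGraph.Walk.nil)).trans
                (by simp)
            · exact ih n
        _ = n + 1 := by omega

end helpers

section spider
variable {V : Type*} [Fintype V] {G : SimpleGraph V} {r : ℕ} {X : Fin r → Set V}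

lemma three_mem {S : Set V} (h : S.ncard ≤ 2) {x y z : V} (hx : x ∈ S) (hy : y ∈ S)
    (hz : z ∈ S) (hxy : x ≠ y) (hxz : x ≠ z) (hyz : y ≠ z) : False := by
  have hsub : ({x, y, z} : Set V) ⊆ S := by
    intro t ht
    rcases ht with rfl | rfl | rfl <;> assumption
  have h3 : ({x, y, z} : Set V).ncard = 3 := Set.ncard_eq_three.mpr ⟨x, y, z, hxy, hxz, hyz, rfl⟩
  have := Set.ncard_le_ncard hsub S.toFinite
  omega

lemma legsL (hconv : ∀ v (i j k : Fin r), i ≤ j → j ≤ k → v ∈ X i → v ∈ X k → v ∈ X j)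
    (hsize : ∀ i, (X i).ncard ≤ 2) {z z' w w' : V} {iz iw jz jw : Fin r}
    (hziz : z ∈ X iz) (hzjz : z ∈ X jz) (hz'jz : z' ∈ X jz)
    (hwiw : w ∈ X iw) (hwjw : w ∈ X jw) (hw'jw : w' ∈ X jw)
    (d1 : z ≠ w) (d2 : z ≠ w') (d3 : z' ≠ w) (dz : z ≠ z') (dw : w ≠ w')
    (h1 : jz ≤ iw) (h2 : jw ≤ iz) : False := by
  rcases le_total jz jw with h | h
  · exact three_mem (hsize jw) (hconv z jz jw iz h h2 hzjz hziz) hwjw hw'jw d1 d2 dw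
  · exact three_mem (hsize jz) (hconv w jw jz iw h h1 hwjw hwiw) hzjz hz'jz d1.symm d3.symm dz

lemma legsR (hconv : ∀ v (i j k : Fin r), i ≤ j → j ≤ k → v ∈ X i → v ∈ X k → v ∈ X j)
    (hsize : ∀ i, (X i).ncard ≤ 2) {z z' w w' : V} {iz iw jz jw : Fin r}
    (hziz : z ∈ X iz) (hzjz : z ∈ X jz) (hz'jz : z' ∈ X jz)
    (hwiw : w ∈ X iw) (hwjw : w ∈ X jw) (hw'jw : w' ∈ X jw)
    (d1 : z ≠ w) (d2 : z ≠ w') (d3 : z' ≠ w) (dz : z ≠ z') (dw : w ≠ w')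
    (h1 : iz ≤ jw) (h2 : iw ≤ jz) : False := by
  rcases le_total jz jw with h | h
  · exact three_mem (hsize jz) (hconv w iw jz jw h2 h hwiw hwjw) hzjz hz'jz d1.symm d3.symm dz
  · exact three_mem (hsize jw) (hconv z iz jw jz h1 h hziz hzjz) hwjw hw'jw d1 d2 dw

lemma spider (hX : IsPathDecomp G X) (hsz : ∀ i, (X i).ncard ≤ 2)
    {y a a' b b' c c' : V}
    (hab : a ≠ b) (hab' : a ≠ b') (ha'b : a' ≠ b)
    (hac : a ≠ c) (hac' : a ≠ c') (ha'c : a' ≠ c)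
    (hbc : b ≠ c) (hbc' : b ≠ c') (hb'c : b' ≠ c)
    (hya' : y ≠ a') (hyb' : y ≠ b') (hyc' : y ≠ c')
    (eya : G.Adj y a) (eyb : G.Adj y b) (eyc : G.Adj y c)
    (ea : G.Adj a a') (eb : G.Adj b b') (ec : G.Adj c c') : False := by
  obtain ⟨hcov, hedge, hconv⟩ := hX
  obtain ⟨ia, hyia, haia⟩ := hedge eya
  obtain ⟨ib, hyib, hbib⟩ := hedge eyb
  obtain ⟨ic, hyic, hcic⟩ := hedge eyc
  obtain ⟨ja, haja, ha'ja⟩ := hedge ea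
  obtain ⟨jb, hbjb, hb'jb⟩ := hedge eb
  obtain ⟨jc, hcjc, hc'jc⟩ := hedge ec
  have hyja : y ∉ X ja := fun h => three_mem (hsz ja) h haja ha'ja eya.ne hya' ea.ne
  have hyjb : y ∉ X jb := fun h => three_mem (hsz jb) h hbjb hb'jb eyb.ne hyb' eb.ne
  have hyjc : y ∉ X jc := fun h => three_mem (hsz jc) h hcjc hc'jc eyc.ne hyc' ec.ne
  set m := min ia (min ib ic) with hm
  set M := max ia (max ib ic) with hM
  have hym : y ∈ X m := by
    rcases min_cases ia (min ib ic) with ⟨h1, _⟩ | ⟨h1, _⟩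
    · rw [hm, h1]; exact hyia
    · rcases min_cases ib ic with ⟨h2, _⟩ | ⟨h2, _⟩ <;> rw [hm, h1, h2] <;> assumption
  have hyM : y ∈ X M := by
    rcases max_cases ia (max ib ic) with ⟨h1, _⟩ | ⟨h1, _⟩
    · rw [hM, h1]; exact hyia
    · rcases max_cases ib ic with ⟨h2, _⟩ | ⟨h2, _⟩ <;> rw [hM, h1, h2] <;> assumption
  have hmia : m ≤ ia := min_le_left _ _
  have hmib : m ≤ ib := le_trans (min_le_right _ _) (min_le_left _ _)
  have hmic : m ≤ ic := le_trans (min_le_right _ _) (min_le_right _ _)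
  have hMia : ia ≤ M := le_max_left _ _
  have hMib : ib ≤ M := le_trans (le_max_left _ _) (le_max_right _ _)
  have hMic : ic ≤ M := le_trans (le_max_right _ _) (le_max_right _ _)
  have side : ∀ j : Fin r, y ∉ X j → j < m ∨ M < j := by
    intro j hj
    rcases lt_or_ge j m with h | h
    · exact Or.inl h
    rcases le_or_gt j M with h2 | h2
    · exact absurd (hconv y m j M h h2 hym hyM) hj
    · exact Or.inr h2
  rcases side ja hyja with sa | sa <;> rcases side jb hyjb with sb | sb <;>
    rcases side jc hyjc with sc | sc
  · exact legsL hconv hsz haia haja ha'ja hbib hbjb hb'jb hab hab' ha'b ea.ne eb.ne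
      (le_trans sa.le hmib) (le_trans sb.le hmia)
  · exact legsL hconv hsz haia haja ha'ja hbib hbjb hb'jb hab hab' ha'b ea.ne eb.ne
      (le_trans sa.le hmib) (le_trans sb.le hmia)
  · exact legsL hconv hsz haia haja ha'ja hcic hcjc hc'jc hac hac' ha'c ea.ne ec.ne
      (le_trans sa.le hmic) (le_trans sc.le hmia)
  · exact legsR hconv hsz hbib hbjb hb'jb hcic hcjc hc'jc hbc hbc' hb'c eb.ne ec.ne
      (le_trans hMib sc.le) (le_trans hMic sb.le)
  · exact legsL hconv hsz hbib hbjb hb'jb hcic hcjc hc'jc hbc hbc' hb'c eb.ne ec.ne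
      (le_trans sb.le hmic) (le_trans sc.le hmib)
  · exact legsR hconv hsz haia haja ha'ja hcic hcjc hc'jc hac hac' ha'c ea.ne ec.ne
      (le_trans hMia sc.le) (le_trans hMic sa.le)
  · exact legsR hconv hsz haia haja ha'ja hbib hbjb hb'jb hab hab' ha'b ea.ne eb.ne
      (le_trans hMia sb.le) (le_trans hMib sa.le)
  · exact legsR hconv hsz haia haja ha'ja hbib hbjb hb'jb hab hab' ha'b ea.ne eb.ne
      (le_trans hMia sb.le) (le_trans hMib sa.le)

end spider

/-- Every finite tree of pathwidth at most 1 is a caterpillar, i.e. has path eccentricity at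
most 1. -/
theorem stmt_18 {V : Type*} [Fintype V] (T : SimpleGraph V) (hT : T.IsTree)
    (hpw : pathwidth T ≤ 1) : pathEcc T ≤ 1 := by
  classical
  -- extract a width-1 path decomposition
  have hSne : {w | ∃ (r : ℕ) (X : Fin r → Set V), IsPathDecomp T X ∧
      ∀ i, (X i).ncard ≤ w + 1}.Nonempty := by
    refine ⟨Fintype.card V, 1, fun _ => Set.univ,
      ⟨fun v => ⟨0, Set.mem_univ v⟩, fun u v _ => ⟨0, Set.mem_univ u, Set.mem_univ v⟩,
        fun v i j k _ _ _ _ => Set.mem_univ v⟩, fun i => ?_⟩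
    rw [Set.ncard_univ, Nat.card_eq_fintype_card]
    omega
  have hmem : pathwidth T ∈ {w | ∃ (r : ℕ) (X : Fin r → Set V), IsPathDecomp T X ∧
      ∀ i, (X i).ncard ≤ w + 1} := Nat.sInf_mem hSne
  obtain ⟨r, X, hX, hbd⟩ := hmem
  have hsz : ∀ i, (X i).ncard ≤ 2 := fun i => (hbd i).trans (by omega)
  -- a longest path
  have hconn := hT.isConnected
  have hne : Nonempty V := hconn.nonempty
  have hbdd : BddAbove {n | ∃ (u v : V) (p : T.Walk u v), p.IsPath ∧ p.length = n} := by
    refine ⟨Fintype.card V, fun n hn => ?_⟩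
    obtain ⟨u, v, p, hp, he⟩ := hn
    exact he ▸ hp.length_lt.le
  have hLne : {n | ∃ (u v : V) (p : T.Walk u v), p.IsPath ∧ p.length = n}.Nonempty :=
    ⟨0, Classical.arbitrary V, Classical.arbitrary V, SimpleGraph.Walk.nil,
      SimpleGraph.Walk.IsPath.nil, rfl⟩
  obtain ⟨u, v, p, hp, hplen⟩ := Nat.sSup_mem hLne hbdd
  have hmax : ∀ (u' v' : V) (q : T.Walk u' v'), q.IsPath → q.length ≤ p.length :=
    fun u' v' q hq => hplen ▸ le_csSup hbdd ⟨u', v', q, hq, rfl⟩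
  -- it suffices to show that p dominates
  have main : ∀ x : V, ∃ y ∈ p.support, T.dist x y ≤ 1 := by
    intro x
    by_contra hcon
    push_neg at hcon
    -- nearest vertex of the path
    obtain ⟨y, hyF, hmin⟩ := (p.support.toFinset).exists_min_image (fun y => T.dist x y)
      ⟨u, List.mem_toFinset.mpr p.start_mem_support⟩
    have hy' : y ∈ p.support := List.mem_toFinset.mp hyF
    have hmin' : ∀ z ∈ p.support, T.dist x y ≤ T.dist x z :=
      fun z hz => hmin z (List.mem_toFinset.mpr hz)
    set d := T.dist x y with hdd
    have hd2 : 2 ≤ d := hcon y hy'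
    obtain ⟨q, hq, hqlen⟩ := hconn.exists_path_of_dist x y
    set a := q.getVert (d - 1) with ha
    set a' := q.getVert (d - 2) with ha'
    have haa : T.Adj a' a := by
      have := q.adj_getVert_succ (i := d - 2) (by omega)
      rwa [show d - 2 + 1 = d - 1 by omega] at this
    have hql : q.length = d := hqlen.trans hdd.symm
    have hgd : q.getVert d = y := q.getVert_of_length_le (le_of_eq hql)
    have hay : T.Adj a y := by
      have := q.adj_getVert_succ (i := d - 1) (by omega)
      rwa [show d - 1 + 1 = d by omega, hgd] at this
    have hdax : T.dist x a ≤ d - 1 := my_dist_getVert_le hconn q (d - 1)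
    have hda'x : T.dist x a' ≤ d - 2 := my_dist_getVert_le hconn q (d - 2)
    have hanot : a ∉ p.support := fun h => by have := hmin' a h; omega
    have ha'not : a' ∉ p.support := fun h => by have := hmin' a' h; omega
    -- split p at y
    set pre := p.takeUntil y hy' with hpre0
    set suf := p.dropUntil y hy' with hsuf0
    have hpreP : pre.IsPath := hp.takeUntil hy'
    have hsufP : suf.IsPath := hp.dropUntil hy'
    have hlen : pre.length + suf.length = p.length := by
      have := congrArg SimpleGraph.Walk.length (p.take_spec hy')
      rwa [SimpleGraph.Walk.length_append] at this
    have hsubpre := p.support_takeUntil_subset hy'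
    have hsubsuf := p.support_dropUntil_subset hy'
    have hanotpre : a ∉ pre.support := fun h => hanot (hsubpre h)
    have ha'notpre : a' ∉ pre.support := fun h => ha'not (hsubpre h)
    have hanotsuf : a ∉ suf.support := fun h => hanot (hsubsuf h)
    have ha'notsuf : a' ∉ suf.support := fun h => ha'not (hsubsuf h)
    -- both sides of y on p have length ≥ 2, by maximality of p
    have hs2 : 2 ≤ suf.length := by
      by_contra h
      push_neg at h
      have hw1 : (SimpleGraph.Walk.cons haa (SimpleGraph.Walk.cons hay pre.reverse)).IsPath := by
        rw [SimpleGraph.Walk.cons_isPath_iff, SimpleGraph.Walk.cons_isPath_iff]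
        refine ⟨⟨hpreP.reverse, ?_⟩, ?_⟩
        · rw [SimpleGraph.Walk.support_reverse, List.mem_reverse]
          exact hanotpre
        · simp only [SimpleGraph.Walk.support_cons, List.mem_cons]
          push_neg
          refine ⟨haa.ne, ?_⟩
          rw [SimpleGraph.Walk.support_reverse, List.mem_reverse]
          exact ha'notpre
      have := hmax _ _ _ hw1
      simp only [SimpleGraph.Walk.length_cons, SimpleGraph.Walk.length_reverse] at this
      omega
    have hp2 : 2 ≤ pre.length := by
      by_contra h
      push_neg at h
      have hw2 : (SimpleGraph.Walk.cons haa (SimpleGraph.Walk.cons hay suf)).IsPath := by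
        rw [SimpleGraph.Walk.cons_isPath_iff, SimpleGraph.Walk.cons_isPath_iff]
        refine ⟨⟨hsufP, hanotsuf⟩, ?_⟩
        simp only [SimpleGraph.Walk.support_cons, List.mem_cons]
        push_neg
        exact ⟨haa.ne, ha'notsuf⟩
      have := hmax _ _ _ hw2
      simp only [SimpleGraph.Walk.length_cons] at this
      omega
    -- the spider legs on the path
    set rev := pre.reverse with hrev0
    have hrevP : rev.IsPath := hpreP.reverse
    have hrevlen : rev.length = pre.length := SimpleGraph.Walk.length_reverse _
    set b := suf.getVert 1 with hb
    set b' := suf.getVert 2 with hb'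
    set c := rev.getVert 1 with hc
    set c' := rev.getVert 2 with hc'
    have eyb : T.Adj y b := by
      have := suf.adj_getVert_succ (i := 0) (by omega)
      rwa [SimpleGraph.Walk.getVert_zero] at this
    have ebb : T.Adj b b' := suf.adj_getVert_succ (by omega)
    have eyc : T.Adj y c := by
      have := rev.adj_getVert_succ (i := 0) (by omega)
      rwa [SimpleGraph.Walk.getVert_zero] at this
    have ecc : T.Adj c c' := rev.adj_getVert_succ (by omega)
    have hbsuf : b ∈ suf.support := my_getVert_mem_support suf 1
    have hb'suf : b' ∈ suf.support := my_getVert_mem_support suf 2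
    have hcpre : c ∈ pre.support := by
      have := my_getVert_mem_support rev 1
      rwa [hrev0, SimpleGraph.Walk.support_reverse, List.mem_reverse] at this
    have hc'pre : c' ∈ pre.support := by
      have := my_getVert_mem_support rev 2
      rwa [hrev0, SimpleGraph.Walk.support_reverse, List.mem_reverse] at this
    have hbP : b ∈ p.support := hsubsuf hbsuf
    have hb'P : b' ∈ p.support := hsubsuf hb'suf
    have hcP : c ∈ p.support := hsubpre hcpre
    have hc'P : c' ∈ p.support := hsubpre hc'pre
    -- distinctness
    have hyb' : y ≠ b' := by
      have := my_path_getVert_ne hsufP (show 0 < 2 by omega) (by omega)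
      rwa [SimpleGraph.Walk.getVert_zero] at this
    have hyc' : y ≠ c' := by
      have := my_path_getVert_ne hrevP (show 0 < 2 by omega) (by omega)
      rwa [SimpleGraph.Walk.getVert_zero] at this
    -- disjointness of the two sides
    have hspec : p.support = pre.support ++ suf.support.tail := by
      rw [← SimpleGraph.Walk.support_append, p.take_spec hy']
    have hnodup := hp.support_nodup
    rw [hspec, List.nodup_append] at hnodup
    have hdisj : pre.support.Disjoint suf.support.tail :=
      fun x hx1 hx2 => hnodup.2.2 x hx1 x hx2 rfl
    have hbtail : b ∈ suf.support.tail := by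
      have hsupeq := suf.support_eq_cons
      rw [hsupeq, List.mem_cons] at hbsuf
      rcases hbsuf with h | h
      · exact absurd h.symm eyb.ne
      · exact h
    have hb'tail : b' ∈ suf.support.tail := by
      have hsupeq := suf.support_eq_cons
      rw [hsupeq, List.mem_cons] at hb'suf
      rcases hb'suf with h | h
      · exact absurd h.symm hyb'
      · exact h
    have hbc : b ≠ c := fun h => hdisj (h ▸ hcpre) hbtail
    have hbc' : b ≠ c' := fun h => hdisj (h ▸ hc'pre) hbtail
    have hb'c : b' ≠ c := fun h => hdisj (h ▸ hcpre) hb'tail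
    -- apply the spider lemma with center y and legs (a,a'), (b,b'), (c,c')
    exact spider hX hsz
      (fun h => hanot (by rw [h]; exact hbP)) (fun h => hanot (by rw [h]; exact hb'P))
      (fun h => ha'not (by rw [h]; exact hbP))
      (fun h => hanot (by rw [h]; exact hcP)) (fun h => hanot (by rw [h]; exact hc'P))
      (fun h => ha'not (by rw [h]; exact hcP))
      hbc hbc' hb'c
      (fun h => ha'not (by rw [← h]; exact hy')) hyb' hyc'
      hay.symm eyb eyc haa.symm ebb ecc
  exact Nat.sInf_le ⟨u, v, p, hp, main⟩
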